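/- For every n ≥ 6 there exists a connected outerplanar graph on n vertices with exactly ⌊3(n−1)/2⌋ edges that contains no subgraph isomorphic to the double star S_{2,2}. (One such graph is G_n = K_1 + (⌊(n−1)/2⌋ K_2 ∪ ε K_1), the join of a single vertex with a disjoint union of ⌊(n−1)/2⌋ edges and ε ∈ {0,1} isolated vertices, where ε ≡ n−1 (mod 2).) -/

import Mathlib

open SimpleGraph Finset

/-- `G` contains a copy of the double star `S_{p,q}`: adjacent centers `x, y`,
with `p` leaves attached to `x` and `q` leaves attached to `y`, all distinct. -/
def ContainsDoubleStar {V : Type*} (G : SimpleGraph V) (p q : ℕ) : Prop :=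
  ∃ (x y : V) (X Y : Finset V), G.Adj x y ∧ X.card = p ∧ Y.card = q ∧
    Disjoint X Y ∧ y ∉ X ∧ x ∉ Y ∧ (∀ v ∈ X, G.Adj x v) ∧ (∀ v ∈ Y, G.Adj y v)

/-- A graph is outerplanar iff it admits a one-page book embedding: a linear
ordering of the vertices such that no two edges cross. -/
def IsOuterplanar {V : Type*} (G : SimpleGraph V) : Prop :=
  ∃ σ : V → Fin (Nat.card V), Function.Bijective σ ∧
    ∀ a b c d : V, G.Adj a b → G.Adj c d → ¬ (σ a < σ c ∧ σ c < σ b ∧ σ b < σ d)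

def myG (n : ℕ) : SimpleGraph (Fin n) where
  Adj a b := a ≠ b ∧ (a.val = 0 ∨ b.val = 0 ∨ (a.val + 1) / 2 = (b.val + 1) / 2)
  symm := by
    constructor
    rintro a b ⟨h1, h2⟩
    exact ⟨h1.symm, by tauto⟩
  loopless := by constructor; rintro a ⟨h1, _⟩; exact h1 rfl

lemma myG_adj {n : ℕ} {a b : Fin n} :
    (myG n).Adj a b ↔ a ≠ b ∧ (a.val = 0 ∨ b.val = 0 ∨ (a.val + 1) / 2 = (b.val + 1) / 2) :=
  Iff.rfl

instance (n : ℕ) : DecidableRel (myG n).Adj := fun a b =>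
  decidable_of_iff (a ≠ b ∧ (a.val = 0 ∨ b.val = 0 ∨ (a.val + 1) / 2 = (b.val + 1) / 2)) myG_adj.symm

lemma three_neighbors {n : ℕ} {v w1 w2 w3 : Fin n} (hv : v.val ≠ 0)
    (h1 : (myG n).Adj v w1) (h2 : (myG n).Adj v w2) (h3 : (myG n).Adj v w3)
    (d12 : w1 ≠ w2) (d13 : w1 ≠ w3) (d23 : w2 ≠ w3) : False := by
  obtain ⟨e1, f1⟩ := h1
  obtain ⟨e2, f2⟩ := h2
  obtain ⟨e3, f3⟩ := h3
  have e1' : v.val ≠ w1.val := fun h => e1 (Fin.ext h)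
  have e2' : v.val ≠ w2.val := fun h => e2 (Fin.ext h)
  have e3' : v.val ≠ w3.val := fun h => e3 (Fin.ext h)
  have d12' : w1.val ≠ w2.val := fun h => d12 (Fin.ext h)
  have d13' : w1.val ≠ w3.val := fun h => d13 (Fin.ext h)
  have d23' : w2.val ≠ w3.val := fun h => d23 (Fin.ext h)
  omega

theorem stmt8 (n : ℕ) (hn : 6 ≤ n) :
    ∃ G : SimpleGraph (Fin n), G.Connected ∧ IsOuterplanar G ∧
      ¬ ContainsDoubleStar G 2 2 ∧ Nat.card G.edgeSet = 3 * (n - 1) / 2 := by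
  refine ⟨myG n, ?_, ?_, ?_, ?_⟩
  · -- Connected
    rw [connected_iff]
    have key : ∀ u : Fin n, (myG n).Reachable u ⟨0, by omega⟩ := by
      intro u
      by_cases h : u = ⟨0, by omega⟩
      · exact h ▸ Reachable.refl _
      · exact Adj.reachable ⟨h, Or.inr (Or.inl rfl)⟩
    exact ⟨fun u v => (key u).trans (key v).symm, ⟨⟨0, by omega⟩⟩⟩
  · -- Outerplanar
    have hcard : n = Nat.card (Fin n) := by simp
    refine ⟨fun v => Fin.cast hcard v, (finCongr hcard).bijective, ?_⟩
    rintro a b c d ⟨hne1, hh1⟩ ⟨hne2, hh2⟩ ⟨h1, h2, h3⟩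
    simp only [Fin.lt_def, Fin.coe_cast] at h1 h2 h3
    omega
  · -- No S_{2,2}
    rintro ⟨x, y, X, Y, hadj, hX, hY, hdisj, hyX, hxY, hXadj, hYadj⟩
    obtain ⟨a, b, hab, rfl⟩ := Finset.card_eq_two.mp hX
    obtain ⟨c, d, hcd, rfl⟩ := Finset.card_eq_two.mp hY
    simp only [Finset.mem_insert, Finset.mem_singleton, not_or] at hyX hxY
    by_cases hx0 : x.val = 0
    · have hy0 : y.val ≠ 0 := by
        intro h
        exact hadj.ne (Fin.ext (by omega))
      exact three_neighbors hy0 hadj.symm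
        (hYadj c (by simp)) (hYadj d (by simp))
        hxY.1 hxY.2 hcd
    · exact three_neighbors hx0 hadj
        (hXadj a (by simp)) (hXadj b (by simp))
        hyX.1 hyX.2 hab
  · -- Edge count
    classical
    have hm : n - 1 + (n - 1) / 2 > 0 := by omega
    set m := n - 1 with hm_def
    have key : (myG n).edgeFinset.card = m + m / 2 := by
      apply Finset.card_eq_of_bijective (s := (myG n).edgeFinset) (n := m + m / 2)
        (f := fun i h => if hi : i < m then
          Sym2.mk (⟨0, by omega⟩ : Fin n) (⟨i + 1, by omega⟩ : Fin n)
        else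
          Sym2.mk (⟨2 * (i - m) + 1, by omega⟩ : Fin n) (⟨2 * (i - m) + 2, by omega⟩ : Fin n))
      · -- surjective
        intro e he
        revert he
        refine Sym2.ind (fun a b he => ?_) e
        rw [SimpleGraph.mem_edgeFinset, SimpleGraph.mem_edgeSet] at he
        obtain ⟨hne, hor⟩ := he
        have hne' : a.val ≠ b.val := fun h => hne (Fin.ext h)
        by_cases ha0 : a.val = 0
        · refine ⟨b.val - 1, ⟨by omega, ?_⟩⟩
          rw [dif_pos (by omega)]
          have h1 : (⟨0, by omega⟩ : Fin n) = a := Fin.ext (by simp only [Fin.val_mk]; omega)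
          have h2 : (⟨b.val - 1 + 1, by omega⟩ : Fin n) = b := Fin.ext (by simp only [Fin.val_mk]; omega)
          rw [h1, h2]
        · by_cases hb0 : b.val = 0
          · refine ⟨a.val - 1, ⟨by omega, ?_⟩⟩
            rw [dif_pos (by omega)]
            have h1 : (⟨0, by omega⟩ : Fin n) = b := Fin.ext (by simp only [Fin.val_mk]; omega)
            have h2 : (⟨a.val - 1 + 1, by omega⟩ : Fin n) = a := Fin.ext (by simp only [Fin.val_mk]; omega)
            rw [h1, h2]
            exact Sym2.eq_swap
          · have hk : (a.val + 1) / 2 = (b.val + 1) / 2 := by tauto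
            set k := (a.val + 1) / 2 with hk_def
            have hb : b.val < n := b.isLt
            have ha : a.val < n := a.isLt
            have hkm : k - 1 < m / 2 := by omega
            refine ⟨m + (k - 1), ⟨by omega, ?_⟩⟩
            rw [dif_neg (by omega)]
            have hc : (a.val = 2 * k - 1 ∧ b.val = 2 * k) ∨
                (a.val = 2 * k ∧ b.val = 2 * k - 1) := by omega
            rcases hc with ⟨h1, h2⟩ | ⟨h1, h2⟩
            · have e1 : (⟨2 * (m + (k - 1) - m) + 1, by omega⟩ : Fin n) = a :=
                Fin.ext (by simp only [Fin.val_mk]; omega)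
              have e2 : (⟨2 * (m + (k - 1) - m) + 2, by omega⟩ : Fin n) = b :=
                Fin.ext (by simp only [Fin.val_mk]; omega)
              rw [e1, e2]
            · have e1 : (⟨2 * (m + (k - 1) - m) + 1, by omega⟩ : Fin n) = b :=
                Fin.ext (by simp only [Fin.val_mk]; omega)
              have e2 : (⟨2 * (m + (k - 1) - m) + 2, by omega⟩ : Fin n) = a :=
                Fin.ext (by simp only [Fin.val_mk]; omega)
              rw [e1, e2]
              exact Sym2.eq_swap
      · -- membership
        intro i h
        rw [SimpleGraph.mem_edgeFinset]
        split_ifs with hi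
        · rw [SimpleGraph.mem_edgeSet]
          exact ⟨fun hcon => by simpa [Fin.ext_iff] using hcon, Or.inl rfl⟩
        · rw [SimpleGraph.mem_edgeSet]
          refine ⟨fun hcon => by simpa [Fin.ext_iff] using hcon, Or.inr (Or.inr ?_)⟩
          simp only
          omega
      · -- injective
        intro i j hi hj heq
        split_ifs at heq with h1 h2 h2 <;>
          simp only [Sym2.eq, Sym2.rel_iff', Prod.mk.injEq, Prod.swap_prod_mk,
            Fin.mk.injEq] at heq <;> omega
    have hfc : Nat.card (myG n).edgeSet = (myG n).edgeFinset.card := by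
      rw [Nat.card_eq_fintype_card, ← Set.toFinset_card]
      convert rfl
      ext
      simp
    rw [hfc, key]
    omega
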